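/- Let F be a field and let A be the quotient of the free (noncommutative, associative, unital) F-algebra on two generators x₁, x₂ by the two-sided ideal generated by x₁² and x₂². Then the images in A of the alternating words in x₁ and x₂ — that is, the products x_{i₁}·x_{i₂}·⋯·x_{i_n} (n ≥ 0, with the empty word equal to 1) such that consecutive indices differ, i_j ≠ i_{j+1} for all 1 ≤ j < n — form a basis of A as an F-vector space. -/

import Mathlib

/-!
Statement 16: in the quotient `A` of the free algebra on two generators `x₁, x₂` by
the two-sided ideal generated by `x₁²` and `x₂²`, the images of the alternating words
in `x₁, x₂` form a basis of `A` over the base field.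
-/

/-- The relations `x₁² = 0` and `x₂² = 0` in the free algebra on two generators. -/
inductive SquareRel (F : Type*) [Field F] :
    FreeAlgebra F (Fin 2) → FreeAlgebra F (Fin 2) → Prop
  | sq₁ : SquareRel F (FreeAlgebra.ι F (0 : Fin 2) ^ 2) 0
  | sq₂ : SquareRel F (FreeAlgebra.ι F (1 : Fin 2) ^ 2) 0

/-- The image in the quotient algebra of the word `w` in the generators `x₁, x₂`. -/
noncomputable def wordProd (F : Type*) [Field F] (w : List (Fin 2)) :
    RingQuot (SquareRel F) :=
  (w.map fun i => RingQuot.mkAlgHom F (SquareRel F) (FreeAlgebra.ι F i)).prod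



section
variable (F : Type*) [Field F]

abbrev AltWord := {l : List (Fin 2) // l.Chain' (· ≠ ·)}

noncomputable def mkx (i : Fin 2) : RingQuot (SquareRel F) :=
  RingQuot.mkAlgHom F (SquareRel F) (FreeAlgebra.ι F i)

lemma wordProd_nil : wordProd F [] = 1 := rfl

lemma wordProd_cons (i : Fin 2) (w : List (Fin 2)) :
    wordProd F (i :: w) = mkx F i * wordProd F w := by
  simp [wordProd, mkx]

lemma mkx_sq (i : Fin 2) : mkx F i * mkx F i = 0 := by
  have h : ∀ j : Fin 2, SquareRel F (FreeAlgebra.ι F j ^ 2) 0 := by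
    intro j; fin_cases j
    · exact SquareRel.sq₁
    · exact SquareRel.sq₂
  have := RingQuot.mkAlgHom_rel F (h i)
  simpa [mkx, pow_two, map_mul] using this

open Classical in
noncomputable def gmap (i : Fin 2) (w : AltWord) : AltWord →₀ F :=
  if h : (i :: w.1).Chain' (· ≠ ·) then Finsupp.single ⟨i :: w.1, h⟩ 1 else 0

noncomputable def T (i : Fin 2) : Module.End F (AltWord →₀ F) :=
  Finsupp.lift _ F _ (gmap F i)

lemma T_single (i : Fin 2) (w : AltWord) : T F i (Finsupp.single w 1) = gmap F i w := by
  simp [T]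

lemma T_sq (i : Fin 2) : T F i * T F i = 0 := by
  apply Finsupp.lhom_ext
  intro w a
  have : Finsupp.single w a = a • Finsupp.single w (1:F) := by simp
  rw [Module.End.mul_apply]
  rw [this, map_smul, map_smul, T_single]
  rw [gmap]
  split
  · rw [map_smul, T_single, gmap]
    rw [dif_neg]
    · simp
    · simp [List.Chain', List.isChain_cons_cons]
  · simp

noncomputable def phi : FreeAlgebra F (Fin 2) →ₐ[F] Module.End F (AltWord →₀ F) :=
  FreeAlgebra.lift F (T F)

lemma phi_rel : ∀ ⦃x y⦄, SquareRel F x y → phi F x = phi F y := by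
  intro x y h
  cases h with
  | sq₁ => simp only [phi, pow_two, map_mul, map_zero, FreeAlgebra.lift_ι_apply]; exact T_sq F 0
  | sq₂ => simp only [phi, pow_two, map_mul, map_zero, FreeAlgebra.lift_ι_apply]; exact T_sq F 1

noncomputable def psi : RingQuot (SquareRel F) →ₐ[F] Module.End F (AltWord →₀ F) :=
  RingQuot.liftAlgHom F ⟨phi F, phi_rel F⟩

lemma psi_mkx (i : Fin 2) : psi F (mkx F i) = T F i := by
  simp [psi, mkx, RingQuot.liftAlgHom_mkAlgHom_apply, phi]

noncomputable def E : RingQuot (SquareRel F) →ₗ[F] (AltWord →₀ F) where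
  toFun a := psi F a (Finsupp.single ⟨[], List.isChain_nil⟩ 1)
  map_add' a b := by simp
  map_smul' c a := by simp

lemma E_wordProd (w : List (Fin 2)) (h : w.Chain' (· ≠ ·)) :
    E F (wordProd F w) = Finsupp.single ⟨w, h⟩ 1 := by
  induction w with
  | nil => simp [E, wordProd_nil]
  | cons i t ih =>
      have ht : t.Chain' (· ≠ ·) := h.tail
      rw [wordProd_cons]
      have : E F (mkx F i * wordProd F t) = T F i (E F (wordProd F t)) := by
        simp [E, map_mul, psi_mkx, Module.End.mul_apply]
      rw [this, ih ht, T_single, gmap, dif_pos h]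
end

section
variable (F : Type*) [Field F]

lemma indep : LinearIndependent F
    (fun w : {l : List (Fin 2) // l.Chain' (· ≠ ·)} => wordProd F w.val) := by
  apply LinearIndependent.of_comp (E F)
  have : (⇑(E F) ∘ fun w : AltWord => wordProd F w.val) =
      fun w : AltWord => Finsupp.single w (1:F) := by
    funext w
    exact E_wordProd F w.1 w.2
  rw [this]
  simpa using (Finsupp.basisSingleOne : Module.Basis (AltWord) F (AltWord →₀ F)).linearIndependent

lemma hmulS (i : Fin 2) (a : RingQuot (SquareRel F))
    (ha : a ∈ Submodule.span F (Set.range fun w : AltWord => wordProd F w.val)) :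
    mkx F i * a ∈ Submodule.span F (Set.range fun w : AltWord => wordProd F w.val) := by
  set S := Submodule.span F (Set.range fun w : AltWord => wordProd F w.val) with hS
  induction ha using Submodule.span_induction with
  | mem x hx =>
      obtain ⟨w, rfl⟩ := hx
      obtain ⟨l, hl⟩ := w
      match l, hl with
      | [], _ =>
          have : mkx F i * wordProd F [] = wordProd F [i] := by
            rw [wordProd_cons]
          rw [this]
          exact Submodule.subset_span ⟨⟨[i], List.isChain_singleton i⟩, rfl⟩
      | j :: t, hl =>
          by_cases hij : i = j
          · subst hij
            have : mkx F i * wordProd F (i :: t) = 0 := by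
              rw [wordProd_cons, ← mul_assoc, mkx_sq, zero_mul]
            rw [this]; exact Submodule.zero_mem _
          · have hc : (i :: j :: t).Chain' (· ≠ ·) := List.IsChain.cons_cons hij hl
            rw [← wordProd_cons]
            exact Submodule.subset_span ⟨⟨i :: j :: t, hc⟩, rfl⟩
  | zero => simpa using Submodule.zero_mem S
  | add x y _ _ hx hy => rw [mul_add]; exact Submodule.add_mem S hx hy
  | smul c x _ hx => rw [mul_smul_comm]; exact Submodule.smul_mem S c hx

lemma hword (w : List (Fin 2)) :
    wordProd F w ∈ Submodule.span F (Set.range fun w : AltWord => wordProd F w.val) := by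
  induction w with
  | nil => exact Submodule.subset_span ⟨⟨[], List.isChain_nil⟩, rfl⟩
  | cons i t ih => rw [wordProd_cons]; exact hmulS F i _ ih

lemma hmulword (b : RingQuot (SquareRel F)) (l : List (Fin 2))
    (hb : b ∈ Submodule.span F (Set.range fun w : AltWord => wordProd F w.val)) :
    wordProd F l * b ∈ Submodule.span F (Set.range fun w : AltWord => wordProd F w.val) := by
  induction l with
  | nil => simpa [wordProd_nil] using hb
  | cons i t ih =>
      rw [wordProd_cons, mul_assoc]
      exact hmulS F i _ ih

lemma hmul2 (a b : RingQuot (SquareRel F))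
    (ha : a ∈ Submodule.span F (Set.range fun w : AltWord => wordProd F w.val))
    (hb : b ∈ Submodule.span F (Set.range fun w : AltWord => wordProd F w.val)) :
    a * b ∈ Submodule.span F (Set.range fun w : AltWord => wordProd F w.val) := by
  set S := Submodule.span F (Set.range fun w : AltWord => wordProd F w.val) with hS
  induction ha using Submodule.span_induction with
  | mem x hx =>
      obtain ⟨w, rfl⟩ := hx
      exact hmulword F b w.1 hb
  | zero => simpa using Submodule.zero_mem S
  | add x y _ _ hx hy => rw [add_mul]; exact Submodule.add_mem S hx hy
  | smul c x _ hx => rw [smul_mul_assoc]; exact Submodule.smul_mem S c hx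

lemma spans : Submodule.span F
    (Set.range fun w : {l : List (Fin 2) // l.Chain' (· ≠ ·)} => wordProd F w.val) = ⊤ := by
  rw [eq_top_iff]
  rintro a -
  obtain ⟨b, rfl⟩ := RingQuot.mkAlgHom_surjective F (SquareRel F) a
  induction b using FreeAlgebra.induction with
  | grade0 r =>
      have : (RingQuot.mkAlgHom F (SquareRel F)) (algebraMap F _ r) = r • wordProd F [] := by
        simp [wordProd_nil, Algebra.algebraMap_eq_smul_one]
      rw [this]
      exact Submodule.smul_mem _ r (hword F [])
  | grade1 i =>
      have : (RingQuot.mkAlgHom F (SquareRel F)) (FreeAlgebra.ι F i) = wordProd F [i] := by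
        simp [wordProd, mkx]
      rw [this]
      exact hword F [i]
  | mul x y hx hy => rw [map_mul]; exact hmul2 F _ _ hx hy
  | add x y hx hy => rw [map_add]; exact Submodule.add_mem _ hx hy

end


theorem alternating_words_basis (F : Type*) [Field F] :
    LinearIndependent F
      (fun w : {l : List (Fin 2) // l.Chain' (· ≠ ·)} => wordProd F w.val) ∧
    Submodule.span F
      (Set.range fun w : {l : List (Fin 2) // l.Chain' (· ≠ ·)} => wordProd F w.val) = ⊤ := by
  exact ⟨indep F, spans F⟩
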